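/- Let W be a multigraphon with ρ(W) ∈ (0,∞), let W_t be defined by W_t(x,y,k) = Σ_{h=0}^∞ W(x,y,h)·q(t,h,k, D(W,x)D(W,y)/ρ(W)) for x≠y and W_t(x,x,k) = 1[2|k]·Σ_{h=0}^∞ W(x,x,2h)·q(t,h,k/2, D(W,x)²/(2ρ(W))), and define the multigraphons W_∞(x,y,k) := p(k, D(W,x)D(W,y)/ρ(W)) for x≠y with W_∞(x,x,k) := 1[2|k]·p(k/2, D(W,x)²/(2ρ(W))), and V(x,y,k) := p(k, F_0^{-1}(x)F_0^{-1}(y)/ρ(W)) for x≠y with V(x,x,k) := 1[2|k]·p(k/2, F_0^{-1}(x)²/(2ρ(W))), where F_0(z) = Leb{y∈[0,1] : D(W,y) ≤ z} and F_0^{-1}(x) = min{z : F_0(z) ≥ x}. Then for every k ∈ ℕ and every A ∈ A_k: lim_{t→∞} t_=(A, W_t) = t_=(A, W_∞) and t_=(A, W_∞) = t_=(A, V), i.e. W_∞ and V are equivalent multigraphons (W_∞ ≅ V). -/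

import Mathlib

open MeasureTheory Filter Set
open scoped Classical ENNReal Topology BigOperators

noncomputable section

/-- `B : ℕ → ℕ → ℕ` is the adjacency matrix of a multigraph on vertex set `{0,…,n-1}`:
symmetric, even diagonal entries (loops counted twice), vanishing outside `[0,n)²`. -/
def IsAdjOn (n : ℕ) (B : ℕ → ℕ → ℕ) : Prop :=
  (∀ i j, B i j = B j i) ∧ (∀ i, 2 ∣ B i i) ∧ ∀ i j, n ≤ i ∨ n ≤ j → B i j = 0

/-- Degree `d(B,i)` of vertex `i` in a multigraph on `n` vertices. -/
def degB (n : ℕ) (B : ℕ → ℕ → ℕ) (i : ℕ) : ℕ := ∑ j ∈ Finset.range n, B i j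

/-- Adjacency matrix of a multigraph on `n` vertices with `m` edges. -/
def IsAdjOnM (n m : ℕ) (B : ℕ → ℕ → ℕ) : Prop :=
  IsAdjOn n B ∧ ∑ i ∈ Finset.range n, ∑ j ∈ Finset.range n, B i j = 2 * m

/-- Top-left `k × k` submatrix (set to zero outside). -/
def subMat (k : ℕ) (B : ℕ → ℕ → ℕ) : ℕ → ℕ → ℕ :=
  fun i j => if i < k ∧ j < k then B i j else 0

/-- Induced homomorphism density `t_=(A,B)` of a `k`-vertex multigraph in an `n`-vertex one. -/
def tEqB (k n : ℕ) (A B : ℕ → ℕ → ℕ) : ℝ :=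
  ((Finset.univ.filter fun φ : Fin k → Fin n =>
      ∀ i j : Fin k, A i j = B (φ i) (φ j)).card : ℝ) / (n : ℝ) ^ k

/-- A multigraphon: symmetric, probability distribution on ℕ in each fibre over `[0,1]²`,
no odd diagonal values. -/
def IsMultigraphon (W : ℝ → ℝ → ℕ → ℝ) : Prop :=
  Measurable (fun p : ℝ × ℝ × ℕ => W p.1 p.2.1 p.2.2) ∧
  (∀ x y k, 0 ≤ W x y k ∧ W x y k ≤ 1) ∧
  (∀ x y k, W x y k = W y x k) ∧
  (∀ x ∈ Icc (0:ℝ) 1, ∀ y ∈ Icc (0:ℝ) 1, (∑' k : ℕ, W x y k) = 1) ∧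
  (∀ x k, W x x (2 * k + 1) = 0)

/-- Induced homomorphism density `t_=(A,W)` of a multigraph in a multigraphon. -/
def tEqW (k : ℕ) (A : ℕ → ℕ → ℕ) (W : ℝ → ℝ → ℕ → ℝ) : ℝ :=
  ∫ x : Fin k → ℝ in Set.univ.pi (fun _ : Fin k => Icc (0:ℝ) 1),
    ∏ i : Fin k, ∏ j ∈ Finset.univ.filter (fun j : Fin k => i ≤ j),
      W (x i) (x j) (A i j)

/-- The average degree `D(W,x)` of a multigraphon at `x`. -/
def degW (W : ℝ → ℝ → ℕ → ℝ) (x : ℝ) : ℝ :=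
  ∫ y in Icc (0:ℝ) 1, ∑' k : ℕ, (k : ℝ) * W x y k

/-- The edge density `ρ(W)` of a multigraphon. -/
def rhoW (W : ℝ → ℝ → ℕ → ℝ) : ℝ := ∫ x in Icc (0:ℝ) 1, degW W x

/-- One step of the edge reconnecting dynamics: the edge `{vold, w}` is replaced by `{vnew, w}`. -/
def stepER (B : ℕ → ℕ → ℕ) (vold w vnew : ℕ) : ℕ → ℕ → ℕ := fun a b =>
  B a b - (if a = vold ∧ b = w then 1 else 0) - (if a = w ∧ b = vold then 1 else 0)
    + (if a = vnew ∧ b = w then 1 else 0) + (if a = w ∧ b = vnew then 1 else 0)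

/-- Transition probability of the edge reconnecting model with parameter `κ`
on multigraphs with `n` vertices and `m` edges. -/
def transER (κ : ℝ) (n m : ℕ) (B B' : ℕ → ℕ → ℕ) : ℝ :=
  ∑ v ∈ Finset.range n, ∑ w ∈ Finset.range n, ∑ u ∈ Finset.range n,
    ((B v w : ℝ) / (2 * m)) * (((degB n B u : ℝ) + κ) / (2 * m + n * κ)) *
      (if B' = stepER B v w u then 1 else 0)

/-- `(X T)_{T≥0}` is an edge reconnecting model with parameter `κ` on `A_n^m`:
a Markov chain with the edge reconnecting transition probabilities. -/
def IsEdgeReconnecting (κ : ℝ) {Ω : Type*} [MeasurableSpace Ω] (μ : Measure Ω)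
    (n m : ℕ) (X : ℕ → Ω → ℕ → ℕ → ℕ) : Prop :=
  (∀ T i j, Measurable fun ω => X T ω i j) ∧
  (∀ T ω, IsAdjOnM n m (X T ω)) ∧
  ∀ (T : ℕ) (past : ℕ → ℕ → ℕ → ℕ) (B' : ℕ → ℕ → ℕ),
    μ {ω | (∀ S ≤ T, X S ω = past S) ∧ X (T + 1) ω = B'} =
      μ {ω | ∀ S ≤ T, X S ω = past S} * ENNReal.ofReal (transER κ n m (past T) B')

/-- Vertex exchangeability of a random adjacency matrix on `n` vertices. -/
def VertexExchangeable {Ω : Type*} [MeasurableSpace Ω] (μ : Measure Ω)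
    (n : ℕ) (X0 : Ω → ℕ → ℕ → ℕ) : Prop :=
  ∀ τ : Equiv.Perm ℕ, (∀ i, n ≤ i → τ i = i) →
    ∀ B : ℕ → ℕ → ℕ, μ {ω | X0 ω = B} = μ {ω | (fun i j => X0 ω (τ i) (τ j)) = B}

/-- Poisson point probability `p(k,λ)`. -/
def poiP (k : ℕ) (l : ℝ) : ℝ := Real.exp (-l) * l ^ k / (Nat.factorial k : ℝ)

/-- Binomial point probability `b(k,n,p)`. -/
def binP (k n : ℕ) (p : ℝ) : ℝ := (n.choose k : ℝ) * p ^ k * (1 - p) ^ (n - k)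

/-- `q(t,h,k,μ)`: time-`t` transition probability from `h` to `k` of the M/M/∞ queue with
arrival rate `μ` and service rate 1. -/
def qMM (t : ℝ) (h k : ℕ) (μ : ℝ) : ℝ :=
  ∑ l ∈ Finset.range (k + 1), binP l h (Real.exp (-t)) * poiP (k - l) ((1 - Real.exp (-t)) * μ)

/-- The multigraphon `W_t` describing the edge reconnecting model on the `n²` time scale. -/
def WtER (W : ℝ → ℝ → ℕ → ℝ) (t : ℝ) : ℝ → ℝ → ℕ → ℝ := fun x y k =>
  if x = y then
    (if 2 ∣ k then
      ∑' h : ℕ, W x x (2 * h) * qMM t h (k / 2) (degW W x ^ 2 / (2 * rhoW W))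
     else 0)
  else ∑' h : ℕ, W x y h * qMM t h k (degW W x * degW W y / rhoW W)

/-- Gamma density `g(x,α,β)`. -/
def gamP (x α β : ℝ) : ℝ :=
  if 0 < x then x ^ (α - 1) * (β ^ α * Real.exp (-(β * x)) / Real.Gamma α) else 0

/-- `τ(α,t) = α/(e^{αt}-1)`. -/
def tauCIR (α t : ℝ) : ℝ := α / (Real.exp (α * t) - 1)

/-- Transition density `f(t,z,y)` of the Cox–Ingersoll–Ross process with parameters `κ, ρ`. -/
def cirDens (κ ρ t z y : ℝ) : ℝ :=
  ∑' i : ℕ, poiP i (z * tauCIR (κ / ρ) t) * gamP y ((κ : ℝ) + i) (tauCIR (κ / ρ) t + κ / ρ)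

/-- The measure `dF₀` where `F₀(x) = Leb{y ∈ [0,1] : D(W,y) ≤ x}`: the push-forward of
Lebesgue measure on `[0,1]` under the average degree function. -/
def F0meas (W : ℝ → ℝ → ℕ → ℝ) : Measure ℝ :=
  Measure.map (degW W) (volume.restrict (Icc (0:ℝ) 1))

/-- The distribution function `F₀(x) = Leb{y ∈ [0,1] : D(W,y) ≤ x}`. -/
def F0fun (W : ℝ → ℝ → ℕ → ℝ) (x : ℝ) : ℝ :=
  (volume {y ∈ Icc (0:ℝ) 1 | degW W y ≤ x}).toReal

/-- Generalized inverse `F₀⁻¹(x) = min{z : F₀(z) ≥ x}`. -/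
def F0inv (W : ℝ → ℝ → ℕ → ℝ) (x : ℝ) : ℝ := sInf {z : ℝ | x ≤ F0fun W z}

/-- The mixed CIR density `f(t,y) = ∫₀^∞ f(t,z,y) dF₀(z)`. -/
def fCIRmix (κ ρ : ℝ) (W : ℝ → ℝ → ℕ → ℝ) (t y : ℝ) : ℝ :=
  ∫ z, cirDens κ ρ t z y ∂(F0meas W)

/-- The distribution function `F_t(x) = ∫₀ˣ f(t,y) dy`. -/
def Fcir (κ ρ : ℝ) (W : ℝ → ℝ → ℕ → ℝ) (t x : ℝ) : ℝ :=
  ∫ y in Ioc (0:ℝ) x, fCIRmix κ ρ W t y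

/-- Generalized inverse `F_t⁻¹(x) = min{z : F_t(z) ≥ x}`. -/
def FcirInv (κ ρ : ℝ) (W : ℝ → ℝ → ℕ → ℝ) (t x : ℝ) : ℝ :=
  sInf {z : ℝ | x ≤ Fcir κ ρ W t z}

/-- The multigraphon `Ŵ_t` describing the edge reconnecting model on the `n³` time scale. -/
def WhatER (κ : ℝ) (W : ℝ → ℝ → ℕ → ℝ) (t : ℝ) : ℝ → ℝ → ℕ → ℝ := fun x y k =>
  if x = y then
    (if 2 ∣ k then poiP (k / 2) (FcirInv κ (rhoW W) W t x ^ 2 / (2 * rhoW W)) else 0)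
  else poiP k (FcirInv κ (rhoW W) W t x * FcirInv κ (rhoW W) W t y / rhoW W)

/-- The product measure on `ℝ^k` of `k` i.i.d. coordinates with density `f(t,·)`. -/
def cirPi (κ ρ : ℝ) (W : ℝ → ℝ → ℕ → ℝ) (t : ℝ) (k : ℕ) : Measure (Fin k → ℝ) :=
  volume.withDensity fun z => ∏ i : Fin k, ENNReal.ofReal (fCIRmix κ ρ W t (z i))

/-- Condition (E): uniform exponential moment bound for the initial multigraphs. -/
def CondE (B : (n : ℕ) → ℕ → ℕ → ℕ) : Prop :=
  ∃ lam : ℝ, 0 < lam ∧ ∃ C : ℝ, ∀ n : ℕ,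
    (∑ i ∈ Finset.range n, ∑ j ∈ (Finset.range n).filter (fun j => i < j),
        Real.exp (lam * (B n i j : ℝ))) ≤ C * (n.choose 2 : ℝ) ∧
    (∑ i ∈ Finset.range n, Real.exp (lam * (B n i i : ℝ))) ≤ C * (n : ℝ)

/-- Convergence `B_n → W` of a sequence of multigraphs to a multigraphon. -/
def GraphSeqConvTo (B : (n : ℕ) → ℕ → ℕ → ℕ) (W : ℝ → ℝ → ℕ → ℝ) : Prop :=
  ∀ (k : ℕ) (A : ℕ → ℕ → ℕ), IsAdjOn k A →
    Tendsto (fun n => tEqB k n A (B n)) atTop (𝓝 (tEqW k A W))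


/-- The multigraphon `W_∞ = lim_{t→∞} W_t`: Poisson fibres driven by the average degrees. -/
def WinfER (W : ℝ → ℝ → ℕ → ℝ) : ℝ → ℝ → ℕ → ℝ := fun x y k =>
  if x = y then
    (if 2 ∣ k then poiP (k / 2) (degW W x ^ 2 / (2 * rhoW W)) else 0)
  else poiP k (degW W x * degW W y / rhoW W)

/-- The multigraphon `V`: Poisson fibres driven by `F₀⁻¹`. -/
def VER (W : ℝ → ℝ → ℕ → ℝ) : ℝ → ℝ → ℕ → ℝ := fun x y k =>
  if x = y then
    (if 2 ∣ k then poiP (k / 2) (F0inv W x ^ 2 / (2 * rhoW W)) else 0)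
  else poiP k (F0inv W x * F0inv W y / rhoW W)

section AuxProofs

variable {W : ℝ → ℝ → ℕ → ℝ}

lemma poiP_nonneg {k : ℕ} {l : ℝ} (hl : 0 ≤ l) : 0 ≤ poiP k l := by
  unfold poiP; positivity

lemma poiP_le_one {k : ℕ} {l : ℝ} (hl : 0 ≤ l) : poiP k l ≤ 1 := by
  unfold poiP
  rw [div_le_one (by positivity)]
  have h := Real.pow_div_factorial_le_exp (x := l) hl k
  rw [div_le_iff₀ (by positivity)] at h
  calc Real.exp (-l) * l ^ k ≤ Real.exp (-l) * (Real.exp l * (k.factorial : ℝ)) := by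
        exact mul_le_mul_of_nonneg_left h (Real.exp_nonneg _)
    _ = (k.factorial : ℝ) := by rw [← mul_assoc, ← Real.exp_add]; simp

lemma continuous_poiP (k : ℕ) : Continuous (poiP k) := by
  unfold poiP; fun_prop

lemma binP_nonneg {k n : ℕ} {p : ℝ} (h0 : 0 ≤ p) (h1 : p ≤ 1) : 0 ≤ binP k n p := by
  have : 0 ≤ 1 - p := by linarith
  unfold binP; positivity

lemma sum_binP_eq_one {n m : ℕ} (hm : n < m) {p : ℝ} :
    ∑ l ∈ Finset.range m, binP l n p = 1 := by
  have h1 : ∑ l ∈ Finset.range (n+1), binP l n p = 1 := by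
    have := add_pow p (1-p) n
    simp only [add_sub_cancel, one_pow] at this
    rw [show ∑ l ∈ Finset.range (n+1), binP l n p
      = ∑ l ∈ Finset.range (n+1), p ^ l * (1-p) ^ (n-l) * (n.choose l : ℝ) by
        refine Finset.sum_congr rfl fun l _ => by unfold binP; ring]
    rw [← this]
  rw [← h1]
  symm
  apply Finset.sum_subset
  · intro x hx; simp only [Finset.mem_range] at *; omega
  · intro x _ hx
    simp only [Finset.mem_range, not_lt] at hx
    have : n.choose x = 0 := Nat.choose_eq_zero_of_lt (by omega)
    unfold binP; rw [this]; push_cast; ring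

lemma sum_binP_le_one {n m : ℕ} {p : ℝ} (h0 : 0 ≤ p) (h1 : p ≤ 1) :
    ∑ l ∈ Finset.range m, binP l n p ≤ 1 := by
  calc ∑ l ∈ Finset.range m, binP l n p
      ≤ ∑ l ∈ Finset.range (max m (n+1)), binP l n p := by
        apply Finset.sum_le_sum_of_subset_of_nonneg
        · exact Finset.range_subset_range.2 (le_max_left _ _)
        · exact fun i _ _ => binP_nonneg h0 h1
    _ = 1 := sum_binP_eq_one (by omega)

lemma qMM_nonneg {t : ℝ} (ht : 0 ≤ t) {h k : ℕ} {μ : ℝ} (hμ : 0 ≤ μ) :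
    0 ≤ qMM t h k μ := by
  have hp0 : (0:ℝ) ≤ Real.exp (-t) := Real.exp_nonneg _
  have hp1 : Real.exp (-t) ≤ 1 := Real.exp_le_one_iff.2 (by linarith)
  apply Finset.sum_nonneg
  intro l _
  exact mul_nonneg (binP_nonneg hp0 hp1) (poiP_nonneg (by nlinarith))

lemma qMM_le_one {t : ℝ} (ht : 0 ≤ t) {h k : ℕ} {μ : ℝ} (hμ : 0 ≤ μ) :
    qMM t h k μ ≤ 1 := by
  have hp0 : (0:ℝ) ≤ Real.exp (-t) := Real.exp_nonneg _
  have hp1 : Real.exp (-t) ≤ 1 := Real.exp_le_one_iff.2 (by linarith)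
  calc qMM t h k μ ≤ ∑ l ∈ Finset.range (k+1), binP l h (Real.exp (-t)) := by
        apply Finset.sum_le_sum
        intro l _
        calc binP l h (Real.exp (-t)) * poiP (k - l) ((1 - Real.exp (-t)) * μ)
            ≤ binP l h (Real.exp (-t)) * 1 :=
              mul_le_mul_of_nonneg_left (poiP_le_one (by nlinarith)) (binP_nonneg hp0 hp1)
          _ = binP l h (Real.exp (-t)) := mul_one _
    _ ≤ 1 := sum_binP_le_one hp0 hp1

lemma binP_zero (l h : ℕ) : binP l h 0 = if l = 0 then 1 else 0 := by
  unfold binP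
  rcases l with _ | l <;> simp

lemma qMM_tendsto (h k : ℕ) (μ : ℝ) :
    Tendsto (fun t => qMM t h k μ) atTop (𝓝 (poiP k μ)) := by
  have hexp : Tendsto (fun t : ℝ => Real.exp (-t)) atTop (𝓝 0) :=
    Real.tendsto_exp_neg_atTop_nhds_zero
  have key : ∀ l ∈ Finset.range (k+1),
      Tendsto (fun t => binP l h (Real.exp (-t)) * poiP (k - l) ((1 - Real.exp (-t)) * μ))
        atTop (𝓝 ((if l = 0 then 1 else 0) * poiP (k - l) μ)) := by
    intro l _
    have c1 : Continuous fun p : ℝ => binP l h p := by unfold binP; fun_prop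
    have c2 : Continuous fun p : ℝ => poiP (k - l) ((1 - p) * μ) :=
      (continuous_poiP _).comp (by fun_prop)
    have := ((c1.tendsto 0).comp hexp).mul ((c2.tendsto 0).comp hexp)
    simpa [binP_zero, Function.comp] using this
  have := tendsto_finset_sum _ key
  convert this using 2
  · rfl
  rw [Finset.sum_eq_single 0]
  · simp
  · intro b _ hb; simp [hb]
  · intro hb; simp at hb

lemma tsum_qMM_tendsto {w : ℕ → ℝ} (hw0 : ∀ h, 0 ≤ w h) (hw1 : (∑' h, w h) = 1)
    {μ : ℝ} (hμ : 0 ≤ μ) (k : ℕ) :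
    Tendsto (fun t => ∑' h, w h * qMM t h k μ) atTop (𝓝 (poiP k μ)) := by
  have hsum : Summable w := by
    by_contra hs; rw [tsum_eq_zero_of_not_summable hs] at hw1; norm_num at hw1
  have hb : ∀ᶠ t in (atTop : Filter ℝ), ∀ h, ‖w h * qMM t h k μ‖ ≤ w h := by
    filter_upwards [eventually_ge_atTop (0:ℝ)] with t ht h
    rw [Real.norm_eq_abs, abs_mul, abs_of_nonneg (hw0 h), abs_of_nonneg (qMM_nonneg ht hμ)]
    calc w h * qMM t h k μ ≤ w h * 1 :=
          mul_le_mul_of_nonneg_left (qMM_le_one ht hμ) (hw0 h)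
      _ = w h := mul_one _
  have := tendsto_tsum_of_dominated_convergence (f := fun t h => w h * qMM t h k μ)
    (g := fun h => w h * poiP k μ) hsum
    (fun h => tendsto_const_nhds.mul (qMM_tendsto h k μ)) hb
  simpa [tsum_mul_right, hw1] using this

/-- Real tsum of nonneg functions as toReal of ENNReal tsum. -/
lemma tsum_real_eq_toReal {f : ℕ → ℝ} (hf : ∀ n, 0 ≤ f n) :
    ∑' n, f n = (∑' n, ENNReal.ofReal (f n)).toReal := by
  by_cases hs : Summable f
  · rw [← ENNReal.ofReal_tsum_of_nonneg hf hs, ENNReal.toReal_ofReal (tsum_nonneg hf)]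
  · rw [tsum_eq_zero_of_not_summable hs]
    have : (∑' n, ENNReal.ofReal (f n)) = ⊤ := by
      by_contra h
      apply hs
      have := ENNReal.summable_toReal h
      apply Summable.congr this
      intro n
      rw [ENNReal.toReal_ofReal (hf n)]
    rw [this, ENNReal.toReal_top]

lemma measurable_tsum_real {α : Type*} [MeasurableSpace α] {f : ℕ → α → ℝ}
    (h0 : ∀ n x, 0 ≤ f n x) (hf : ∀ n, Measurable (f n)) :
    Measurable fun x => ∑' n, f n x := by
  have : (fun x => ∑' n, f n x)
      = fun x => (∑' n, ENNReal.ofReal (f n x)).toReal := by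
    ext x; exact tsum_real_eq_toReal (fun n => h0 n x)
  rw [this]
  exact (Measurable.ennreal_tsum fun n => (hf n).ennreal_ofReal).ennreal_toReal

lemma W_nonneg (hW : IsMultigraphon W) (x y : ℝ) (k : ℕ) : 0 ≤ W x y k := (hW.2.1 x y k).1

lemma measurable_W_pair (hW : IsMultigraphon W) (k : ℕ) :
    Measurable fun p : ℝ × ℝ => W p.1 p.2 k := by
  have := hW.1.comp (f := fun p : ℝ × ℝ => (p.1, p.2, k))
    (measurable_fst.prodMk (measurable_snd.prodMk measurable_const))
  exact this

lemma degW_nonneg (hW : IsMultigraphon W) (x : ℝ) : 0 ≤ degW W x := by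
  apply integral_nonneg
  intro y
  exact tsum_nonneg fun k => mul_nonneg (by positivity) (W_nonneg hW x y k)

lemma measurable_degW (hW : IsMultigraphon W) : Measurable (degW W) := by
  have hg : Measurable fun p : ℝ × ℝ => ∑' k : ℕ, (k : ℝ) * W p.1 p.2 k :=
    measurable_tsum_real (fun n p => mul_nonneg (by positivity) (W_nonneg hW _ _ _))
      (fun n => measurable_const.mul (measurable_W_pair hW n))
  exact (hg.stronglyMeasurable.integral_prod_right').measurable

lemma summable_W (hW : IsMultigraphon W) {x y : ℝ} (hx : x ∈ Icc (0:ℝ) 1)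
    (hy : y ∈ Icc (0:ℝ) 1) : Summable (W x y) := by
  by_contra hs
  have := hW.2.2.2.1 x hx y hy
  rw [tsum_eq_zero_of_not_summable hs] at this
  norm_num at this

lemma summable_W_even (hW : IsMultigraphon W) {x : ℝ} (hx : x ∈ Icc (0:ℝ) 1) :
    Summable (fun h => W x x (2 * h)) :=
  (summable_W hW hx hx).comp_injective fun a b hab => by omega

lemma tsum_W_even (hW : IsMultigraphon W) {x : ℝ} (hx : x ∈ Icc (0:ℝ) 1) :
    (∑' h : ℕ, W x x (2 * h)) = 1 := by
  have hsum := summable_W hW hx hx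
  have hodd : Summable (fun h => W x x (2 * h + 1)) :=
    hsum.comp_injective fun a b hab => by omega
  have := tsum_even_add_odd (summable_W_even hW hx) hodd
  simp only [hW.2.2.2.2 x] at this ⊢
  rw [tsum_zero, add_zero] at this
  rw [this, hW.2.2.2.1 x hx x hx]

lemma WtER_tendsto (hW : IsMultigraphon W) (hρpos : 0 < rhoW W)
    {x y : ℝ} (hx : x ∈ Icc (0:ℝ) 1) (hy : y ∈ Icc (0:ℝ) 1) (k : ℕ) :
    Tendsto (fun t => WtER W t x y k) atTop (𝓝 (WinfER W x y k)) := by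
  unfold WtER WinfER
  by_cases hxy : x = y
  · simp only [hxy, if_pos rfl]
    by_cases hk : 2 ∣ k
    · simp only [if_pos hk]
      subst hxy
      exact tsum_qMM_tendsto (fun h => W_nonneg hW _ _ _) (tsum_W_even hW hx)
        (by positivity) _
    · simp only [if_neg hk]; exact tendsto_const_nhds
  · simp only [if_neg hxy]
    have hμ : 0 ≤ degW W x * degW W y / rhoW W := by
      have := degW_nonneg hW x; have := degW_nonneg hW y; positivity
    exact tsum_qMM_tendsto (fun h => W_nonneg hW _ _ _) (hW.2.2.2.1 x hx y hy) hμ _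

lemma WtER_mem_Icc (hW : IsMultigraphon W) (hρpos : 0 < rhoW W) {t : ℝ} (ht : 0 ≤ t)
    {x y : ℝ} (hx : x ∈ Icc (0:ℝ) 1) (hy : y ∈ Icc (0:ℝ) 1) (k : ℕ) :
    WtER W t x y k ∈ Icc (0:ℝ) 1 := by
  have key : ∀ (w : ℕ → ℝ), (∀ h, 0 ≤ w h) → (∑' h, w h) = 1 → ∀ (m : ℕ) (μ : ℝ), 0 ≤ μ →
      (∑' h, w h * qMM t h m μ) ∈ Icc (0:ℝ) 1 := by
    intro w hw0 hw1 m μ hμ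
    have hsum : Summable w := by
      by_contra hs; rw [tsum_eq_zero_of_not_summable hs] at hw1; norm_num at hw1
    have hle : ∀ h, w h * qMM t h m μ ≤ w h := fun h => by
      calc w h * qMM t h m μ ≤ w h * 1 :=
            mul_le_mul_of_nonneg_left (qMM_le_one ht hμ) (hw0 h)
        _ = w h := mul_one _
    have h0 : ∀ h, 0 ≤ w h * qMM t h m μ := fun h =>
      mul_nonneg (hw0 h) (qMM_nonneg ht hμ)
    have hsum2 : Summable fun h => w h * qMM t h m μ :=
      Summable.of_nonneg_of_le h0 hle hsum
    constructor
    · exact tsum_nonneg h0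
    · calc (∑' h, w h * qMM t h m μ) ≤ ∑' h, w h := Summable.tsum_le_tsum hle hsum2 hsum
        _ = 1 := hw1
  unfold WtER
  by_cases hxy : x = y
  · simp only [hxy, if_pos rfl]
    by_cases hk : 2 ∣ k
    · simp only [if_pos hk]
      subst hxy
      exact key _ (fun h => W_nonneg hW _ _ _) (tsum_W_even hW hx) _ _ (by positivity)
    · simp only [if_neg hk]; exact ⟨le_refl 0, zero_le_one⟩
  · simp only [if_neg hxy]
    have hμ : 0 ≤ degW W x * degW W y / rhoW W := by
      have := degW_nonneg hW x; have := degW_nonneg hW y; positivity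
    exact key _ (fun h => W_nonneg hW _ _ _) (hW.2.2.2.1 x hx y hy) _ _ hμ

lemma WinfER_mem_Icc (hW : IsMultigraphon W) (hρpos : 0 < rhoW W)
    (x y : ℝ) (k : ℕ) : WinfER W x y k ∈ Icc (0:ℝ) 1 := by
  have hx := degW_nonneg hW x; have hy := degW_nonneg hW y
  unfold WinfER
  by_cases hxy : x = y
  · simp only [hxy, if_pos rfl]
    by_cases hk : 2 ∣ k
    · simp only [if_pos hk]
      exact ⟨poiP_nonneg (by positivity), poiP_le_one (by positivity)⟩
    · simp only [if_neg hk]; exact ⟨le_refl 0, zero_le_one⟩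
  · simp only [if_neg hxy]
    exact ⟨poiP_nonneg (by positivity), poiP_le_one (by positivity)⟩

lemma measurable_WtER_pair (hW : IsMultigraphon W) (hρpos : 0 < rhoW W)
    {t : ℝ} (ht : 0 ≤ t) (k : ℕ) :
    Measurable fun p : ℝ × ℝ => WtER W t p.1 p.2 k := by
  have hd := measurable_degW hW
  have hdiag : MeasurableSet {p : ℝ × ℝ | p.1 = p.2} :=
    measurableSet_eq_fun measurable_fst measurable_snd
  unfold WtER
  refine Measurable.ite hdiag ?_ ?_
  · by_cases hk : 2 ∣ k
    · simp only [if_pos hk]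
      refine measurable_tsum_real ?_ ?_
      · intro h p
        refine mul_nonneg (W_nonneg hW _ _ _) (qMM_nonneg ht ?_)
        have := degW_nonneg hW p.1; positivity
      · intro h
        refine Measurable.mul ?_ ?_
        · exact (measurable_W_pair hW (2*h)).comp (measurable_fst.prodMk measurable_fst)
        · have hc : Continuous fun μ : ℝ => qMM t h (k/2) μ := by
            unfold qMM
            exact continuous_finset_sum _ fun l _ =>
              continuous_const.mul ((continuous_poiP _).comp (by fun_prop))
          exact hc.measurable.comp (by fun_prop)
    · simp only [if_neg hk]; exact measurable_const
  · refine measurable_tsum_real ?_ ?_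
    · intro h p
      refine mul_nonneg (W_nonneg hW _ _ _) (qMM_nonneg ht ?_)
      have := degW_nonneg hW p.1; have := degW_nonneg hW p.2; positivity
    · intro h
      refine Measurable.mul (measurable_W_pair hW h) ?_
      have hc : Continuous fun μ : ℝ => qMM t h k μ := by
        unfold qMM
        exact continuous_finset_sum _ fun l _ =>
          continuous_const.mul ((continuous_poiP _).comp (by fun_prop))
      exact hc.measurable.comp (by fun_prop)

lemma measurable_WinfER_pair (hW : IsMultigraphon W) (k : ℕ) :
    Measurable fun p : ℝ × ℝ => WinfER W p.1 p.2 k := by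
  have hd := measurable_degW hW
  have hdiag : MeasurableSet {p : ℝ × ℝ | p.1 = p.2} :=
    measurableSet_eq_fun measurable_fst measurable_snd
  unfold WinfER
  refine Measurable.ite hdiag ?_ ?_
  · by_cases hk : 2 ∣ k
    · simp only [if_pos hk]
      exact ((continuous_poiP _).measurable).comp (by fun_prop)
    · simp only [if_neg hk]; exact measurable_const
  · exact ((continuous_poiP _).measurable).comp (by fun_prop)

lemma volume_box (k : ℕ) : volume (Set.univ.pi fun _ : Fin k => Icc (0:ℝ) 1) = 1 := by
  rw [volume_pi_pi]
  simp [Real.volume_Icc]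

lemma part1 (hW : IsMultigraphon W) (hρpos : 0 < rhoW W) (k : ℕ) (A : ℕ → ℕ → ℕ) :
    Tendsto (fun t : ℝ => tEqW k A (WtER W t)) atTop (𝓝 (tEqW k A (WinfER W))) := by
  unfold tEqW
  have hbox : MeasurableSet (Set.univ.pi fun _ : Fin k => Icc (0:ℝ) 1) :=
    MeasurableSet.univ_pi fun _ => measurableSet_Icc
  apply tendsto_integral_filter_of_dominated_convergence (bound := fun _ => (1:ℝ))
  · filter_upwards [eventually_ge_atTop (0:ℝ)] with t ht
    apply Measurable.aestronglyMeasurable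
    apply Finset.measurable_prod
    intro i _
    apply Finset.measurable_prod
    intro j _
    have h1 : Measurable fun x : Fin k → ℝ => ((x i, x j) : ℝ × ℝ) := by fun_prop
    exact (measurable_WtER_pair hW hρpos ht (A i j)).comp h1
  · filter_upwards [eventually_ge_atTop (0:ℝ)] with t ht
    filter_upwards [ae_restrict_mem hbox] with x hx
    have hmem : ∀ i : Fin k, x i ∈ Icc (0:ℝ) 1 := fun i => hx i trivial
    rw [Real.norm_eq_abs, abs_of_nonneg]
    · apply Finset.prod_le_one
      · intro i _
        apply Finset.prod_nonneg
        intro j _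
        exact (WtER_mem_Icc hW hρpos ht (hmem i) (hmem j) (A i j)).1
      · intro i _
        apply Finset.prod_le_one
        · intro j _
          exact (WtER_mem_Icc hW hρpos ht (hmem i) (hmem j) (A i j)).1
        · intro j _
          exact (WtER_mem_Icc hW hρpos ht (hmem i) (hmem j) (A i j)).2
    · apply Finset.prod_nonneg
      intro i _
      apply Finset.prod_nonneg
      intro j _
      exact (WtER_mem_Icc hW hρpos ht (hmem i) (hmem j) (A i j)).1
  · rw [integrable_const_iff]
    right
    constructor
    rw [Measure.restrict_apply_univ]
    rw [volume_box]
    exact ENNReal.one_lt_top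
  · filter_upwards [ae_restrict_mem hbox] with x hx
    have hmem : ∀ i : Fin k, x i ∈ Icc (0:ℝ) 1 := fun i => hx i trivial
    apply tendsto_finset_prod
    intro i _
    apply tendsto_finset_prod
    intro j _
    exact WtER_tendsto hW hρpos (hmem i) (hmem j) (A i j)

instance isProb_mu0 : IsProbabilityMeasure ((volume : Measure ℝ).restrict (Icc (0:ℝ) 1)) :=
  ⟨by rw [Measure.restrict_apply_univ]; simp [Real.volume_Icc]⟩

lemma F0fun_eq_toReal (hW : IsMultigraphon W) (z : ℝ) :
    F0fun W z = ((volume.restrict (Icc (0:ℝ) 1)).map (degW W) (Iic z)).toReal := by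
  unfold F0fun
  rw [Measure.map_apply (measurable_degW hW) measurableSet_Iic,
      Measure.restrict_apply ((measurable_degW hW) measurableSet_Iic)]
  congr 2
  ext y; simp only [Set.mem_setOf_eq, Set.mem_inter_iff, Set.mem_preimage, Set.mem_Iic]
  tauto

lemma isProb_nu (hW : IsMultigraphon W) :
    IsProbabilityMeasure ((volume.restrict (Icc (0:ℝ) 1)).map (degW W)) :=
  Measure.isProbabilityMeasure_map (measurable_degW hW).aemeasurable

lemma F0fun_mono (hW : IsMultigraphon W) : Monotone (F0fun W) := by
  intro a b hab
  have := isProb_nu hW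
  rw [F0fun_eq_toReal hW, F0fun_eq_toReal hW]
  exact ENNReal.toReal_mono (measure_ne_top _ _) (measure_mono (Iic_subset_Iic.2 hab))

lemma F0fun_nonneg (z : ℝ) : 0 ≤ F0fun W z := ENNReal.toReal_nonneg

lemma F0fun_le_one (hW : IsMultigraphon W) (z : ℝ) : F0fun W z ≤ 1 := by
  have := isProb_nu hW
  rw [F0fun_eq_toReal hW]
  exact ENNReal.toReal_le_of_le_ofReal zero_le_one (by simpa using prob_le_one)

lemma F0fun_of_neg (hW : IsMultigraphon W) {z : ℝ} (hz : z < 0) : F0fun W z = 0 := by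
  unfold F0fun
  have : {y ∈ Icc (0:ℝ) 1 | degW W y ≤ z} = ∅ := by
    ext y
    simp only [Set.mem_setOf_eq, Set.mem_empty_iff_false, iff_false, not_and]
    intro _ h
    exact absurd (h.trans_lt hz) (not_lt.2 (degW_nonneg hW y))
  rw [this]; simp

lemma tendsto_F0fun_atTop (hW : IsMultigraphon W) :
    Tendsto (F0fun W) atTop (𝓝 1) := by
  have hp := isProb_nu hW
  set ν := (volume.restrict (Icc (0:ℝ) 1)).map (degW W)
  have h1 : Tendsto (fun z => ν (Iic z)) atTop (𝓝 (ν univ)) := tendsto_measure_Iic_atTop ν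
  have h2 := (ENNReal.tendsto_toReal (measure_ne_top ν univ)).comp h1
  simp only [measure_univ, ENNReal.toReal_one] at h2
  refine h2.congr fun z => (F0fun_eq_toReal hW z).symm

lemma F0S_subset (hW : IsMultigraphon W) {x : ℝ} (hx : 0 < x) :
    {z : ℝ | x ≤ F0fun W z} ⊆ Ici 0 := by
  intro z hz
  by_contra h
  rw [Set.mem_Ici, not_le] at h
  rw [Set.mem_setOf_eq, F0fun_of_neg hW h] at hz
  linarith

lemma F0S_nonempty (hW : IsMultigraphon W) {x : ℝ} (hx : x < 1) :
    {z : ℝ | x ≤ F0fun W z}.Nonempty := by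
  have := (tendsto_F0fun_atTop hW).eventually (eventually_ge_nhds hx)
  exact this.exists

lemma F0fun_sInf (hW : IsMultigraphon W) {x : ℝ} (hx0 : 0 < x)
    (hne : {z : ℝ | x ≤ F0fun W z}.Nonempty) :
    x ≤ F0fun W (sInf {z : ℝ | x ≤ F0fun W z}) := by
  set S := {z : ℝ | x ≤ F0fun W z} with hS
  have hbdd : BddBelow S := ⟨0, fun z hz => F0S_subset hW hx0 hz⟩
  obtain ⟨u, hu_anti, hu_t, hu_mem⟩ := exists_seq_tendsto_sInf hne hbdd
  have hIic : Iic (sInf S) = ⋂ n, Iic (u n) := by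
    apply Set.Subset.antisymm
    · exact Set.subset_iInter fun n => Iic_subset_Iic.2 (csInf_le hbdd (hu_mem n))
    · intro y hy
      simp only [Set.mem_iInter, Set.mem_Iic] at hy ⊢
      exact ge_of_tendsto hu_t (Eventually.of_forall hy)
  have hp := isProb_nu hW
  set ν := (volume.restrict (Icc (0:ℝ) 1)).map (degW W)
  have hmeas : Tendsto (fun n => ν (Iic (u n))) atTop (𝓝 (ν (Iic (sInf S)))) := by
    rw [hIic]
    exact tendsto_measure_iInter_atTop
      (fun n => measurableSet_Iic.nullMeasurableSet)
      (fun m n hmn => Iic_subset_Iic.2 (hu_anti hmn)) ⟨0, measure_ne_top ν _⟩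
  have h2 := (ENNReal.tendsto_toReal (measure_ne_top ν _)).comp hmeas
  have h3 : Tendsto (fun n => F0fun W (u n)) atTop (𝓝 (F0fun W (sInf S))) := by
    rw [F0fun_eq_toReal hW]
    exact h2.congr fun n => (F0fun_eq_toReal hW (u n)).symm
  exact ge_of_tendsto h3 (Eventually.of_forall fun n => hu_mem n)

lemma F0inv_le_iff (hW : IsMultigraphon W) {x z : ℝ} (hx0 : 0 < x) (hx1 : x < 1) :
    F0inv W x ≤ z ↔ x ≤ F0fun W z := by
  set S := {z : ℝ | x ≤ F0fun W z} with hS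
  have hne : S.Nonempty := F0S_nonempty hW hx1
  have hbdd : BddBelow S := ⟨0, fun w hw => F0S_subset hW hx0 hw⟩
  constructor
  · intro h
    exact le_trans (F0fun_sInf hW hx0 hne) (F0fun_mono hW h)
  · intro h
    exact csInf_le hbdd h

lemma F0inv_nonneg (hW : IsMultigraphon W) (x : ℝ) : 0 ≤ F0inv W x := by
  unfold F0inv
  by_cases hx : 0 < x
  · rcases Set.eq_empty_or_nonempty {z : ℝ | x ≤ F0fun W z} with h | h
    · rw [h, Real.sInf_empty]
    · exact le_csInf h fun z hz => F0S_subset hW hx hz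
  · push_neg at hx
    have : {z : ℝ | x ≤ F0fun W z} = univ := by
      ext z; simp only [Set.mem_setOf_eq, Set.mem_univ, iff_true]
      exact hx.trans (F0fun_nonneg z)
    rw [this, Real.sInf_of_not_bddBelow]
    rintro ⟨b, hb⟩
    have := hb (Set.mem_univ (b - 1))
    linarith

lemma F0inv_monotoneOn (hW : IsMultigraphon W) {x x' : ℝ}
    (hx' : x' ≤ x) (hne : {z : ℝ | x ≤ F0fun W z}.Nonempty) :
    F0inv W x' ≤ F0inv W x := by
  unfold F0inv
  have hsub : {z : ℝ | x ≤ F0fun W z} ⊆ {z : ℝ | x' ≤ F0fun W z} :=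
    fun z hz => le_trans hx' hz
  by_cases hx'0 : 0 < x'
  · exact csInf_le_csInf ⟨0, fun w hw => F0S_subset hW hx'0 hw⟩ hne hsub
  · push_neg at hx'0
    have : {z : ℝ | x' ≤ F0fun W z} = univ := by
      ext z; simp only [Set.mem_setOf_eq, Set.mem_univ, iff_true]
      exact hx'0.trans (F0fun_nonneg z)
    rw [this, Real.sInf_of_not_bddBelow]
    · exact F0inv_nonneg hW x
    · rintro ⟨b, hb⟩
      have := hb (Set.mem_univ (b - 1))
      linarith

lemma measurable_F0inv (hW : IsMultigraphon W) : Measurable (F0inv W) := by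
  apply measurable_of_Iio
  intro t
  set E := {x : ℝ | {z : ℝ | x ≤ F0fun W z}.Nonempty} with hE
  have hEl : IsLowerSet E := by
    intro a b hba ha
    exact ha.mono fun z hz => le_trans hba hz
  have key : F0inv W ⁻¹' Iio t
      = (E ∩ {x | F0inv W x < t}) ∪ (Eᶜ ∩ {x : ℝ | (0:ℝ) < t}) := by
    ext x
    simp only [Set.mem_preimage, Set.mem_Iio, Set.mem_union, Set.mem_inter_iff,
      Set.mem_compl_iff, Set.mem_setOf_eq, hE]
    by_cases hx : {z : ℝ | x ≤ F0fun W z}.Nonempty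
    · simp [hx]
    · have : F0inv W x = 0 := by
        unfold F0inv
        rw [Set.not_nonempty_iff_eq_empty.1 hx, Real.sInf_empty]
      simp [hx, this]
  rw [key]
  have h1 : IsLowerSet (E ∩ {x | F0inv W x < t}) := by
    intro a b hba ⟨haE, haI⟩
    refine ⟨hEl hba haE, ?_⟩
    exact lt_of_le_of_lt (F0inv_monotoneOn hW hba haE) haI
  have h2 : MeasurableSet (Eᶜ ∩ {x : ℝ | (0:ℝ) < t}) := by
    by_cases ht : (0:ℝ) < t
    · simp only [ht, Set.setOf_true, Set.inter_univ]
      exact (hEl.ordConnected.measurableSet).compl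
    · simp only [ht, Set.setOf_false, Set.inter_empty]
      exact MeasurableSet.empty
  exact (h1.ordConnected.measurableSet).union h2

lemma map_F0inv_eq (hW : IsMultigraphon W) :
    (volume.restrict (Icc (0:ℝ) 1)).map (F0inv W)
      = (volume.restrict (Icc (0:ℝ) 1)).map (degW W) := by
  have hp : IsProbabilityMeasure ((volume.restrict (Icc (0:ℝ) 1)).map (degW W)) :=
    isProb_nu hW
  have hp2 : IsProbabilityMeasure ((volume.restrict (Icc (0:ℝ) 1)).map (F0inv W)) :=
    Measure.isProbabilityMeasure_map (measurable_F0inv hW).aemeasurable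
  refine Measure.ext_of_Iic _ _ fun z => ?_
  rw [Measure.map_apply (measurable_F0inv hW) measurableSet_Iic,
      Measure.restrict_apply ((measurable_F0inv hW) measurableSet_Iic)]
  have h01 : volume ({0, 1} : Set ℝ) = 0 := by
    rw [show ({0, 1} : Set ℝ) = {0} ∪ {1} by rfl]
    refine le_antisymm (le_trans (measure_union_le _ _) ?_) zero_le
    simp
  have hvol_eq : volume (F0inv W ⁻¹' Iic z ∩ Icc 0 1)
      = volume (F0inv W ⁻¹' Iic z ∩ Ioo 0 1) := by
    refine le_antisymm ?_ (measure_mono (Set.inter_subset_inter_right _ Ioo_subset_Icc_self))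
    have hsub : F0inv W ⁻¹' Iic z ∩ Icc 0 1
        ⊆ (F0inv W ⁻¹' Iic z ∩ Ioo 0 1) ∪ {0, 1} := by
      rintro x ⟨hx1, hx2⟩
      rcases eq_or_lt_of_le hx2.1 with h0 | h0
      · exact Or.inr (Or.inl h0.symm)
      rcases eq_or_lt_of_le hx2.2 with h1 | h1
      · exact Or.inr (Or.inr h1)
      · exact Or.inl ⟨hx1, h0, h1⟩
    refine le_trans (measure_mono hsub) (le_trans (measure_union_le _ _) ?_)
    rw [h01, add_zero]
  have hIoo : F0inv W ⁻¹' Iic z ∩ Ioo 0 1 = {x : ℝ | x ≤ F0fun W z} ∩ Ioo 0 1 := by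
    ext x
    simp only [Set.mem_inter_iff, Set.mem_preimage, Set.mem_Iic, Set.mem_setOf_eq, Set.mem_Ioo]
    constructor
    · rintro ⟨h1, h2⟩
      exact ⟨(F0inv_le_iff hW h2.1 h2.2).1 h1, h2⟩
    · rintro ⟨h1, h2⟩
      exact ⟨(F0inv_le_iff hW h2.1 h2.2).2 h1, h2⟩
  have hcomp : volume ({x : ℝ | x ≤ F0fun W z} ∩ Ioo 0 1)
      = ENNReal.ofReal (F0fun W z) := by
    have h0 := F0fun_nonneg (W := W) z
    have h1 := F0fun_le_one hW z
    by_cases hc : F0fun W z < 1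
    · have : {x : ℝ | x ≤ F0fun W z} ∩ Ioo 0 1 = Ioc 0 (F0fun W z) := by
        ext x
        simp only [Set.mem_inter_iff, Set.mem_setOf_eq, Set.mem_Ioo, Set.mem_Ioc]
        constructor
        · rintro ⟨ha, hb, _⟩; exact ⟨hb, ha⟩
        · rintro ⟨ha, hb⟩; exact ⟨hb, ha, lt_of_le_of_lt hb hc⟩
      rw [this, Real.volume_Ioc, sub_zero]
    · push_neg at hc
      have hceq : F0fun W z = 1 := le_antisymm h1 hc
      have : {x : ℝ | x ≤ F0fun W z} ∩ Ioo 0 1 = Ioo 0 1 := by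
        ext x
        simp only [Set.mem_inter_iff, Set.mem_setOf_eq, Set.mem_Ioo]
        exact ⟨fun h => h.2, fun h => ⟨le_trans h.2.le hc, h⟩⟩
      rw [this, Real.volume_Ioo, hceq]; norm_num
  rw [hvol_eq, hIoo, hcomp, F0fun_eq_toReal hW, ENNReal.ofReal_toReal (measure_ne_top _ _)]

lemma restrict_box_eq_pi (k : ℕ) :
    (volume : Measure (Fin k → ℝ)).restrict (Set.univ.pi fun _ : Fin k => Icc (0:ℝ) 1)
      = Measure.pi fun _ : Fin k => (volume : Measure ℝ).restrict (Icc (0:ℝ) 1) := by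
  refine (Measure.pi_eq (μ := fun _ : Fin k => (volume : Measure ℝ).restrict (Icc (0:ℝ) 1))
    fun s hs => ?_).symm
  rw [Measure.restrict_apply (MeasurableSet.univ_pi hs),
      ← Set.pi_inter_distrib, volume_pi_pi]
  congr 1
  ext i
  rw [Measure.restrict_apply (hs i)]

lemma map_pair_eval {k : ℕ} {i j : Fin k} (hij : i ≠ j) (μ0 : Measure ℝ)
    [IsProbabilityMeasure μ0] :
    Measure.map (fun x : Fin k → ℝ => (x i, x j)) (Measure.pi fun _ => μ0)
      = μ0.prod μ0 := by
  refine (Measure.prod_eq fun s t hs ht => ?_).symm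
  rw [Measure.map_apply (by fun_prop) (hs.prod ht)]
  classical
  have hpre : (fun x : Fin k → ℝ => (x i, x j)) ⁻¹' (s ×ˢ t)
      = Set.univ.pi (fun l => if l = i then s else if l = j then t else univ) := by
    ext x
    simp only [Set.mem_preimage, Set.mem_prod, Set.mem_pi, Set.mem_univ, forall_true_left]
    constructor
    · rintro ⟨h1, h2⟩ l
      by_cases hl : l = i
      · subst hl; simp [h1]
      by_cases hl2 : l = j
      · subst hl2; simp [hl, h2]
      · simp [hl, hl2]
    · intro h
      constructor
      · have := h i; simpa using this
      · have := h j; simpa [hij.symm] using this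
  rw [hpre, Measure.pi_pi]
  set g := fun l : Fin k => μ0 (if l = i then s else if l = j then t else univ) with hg
  have h1 : ∏ l, g l = g i * ∏ l ∈ Finset.univ.erase i, g l :=
    (Finset.mul_prod_erase Finset.univ g (Finset.mem_univ i)).symm
  have hjmem : j ∈ Finset.univ.erase i := Finset.mem_erase.2 ⟨hij.symm, Finset.mem_univ j⟩
  have h2 : ∏ l ∈ Finset.univ.erase i, g l
      = g j * ∏ l ∈ (Finset.univ.erase i).erase j, g l :=
    (Finset.mul_prod_erase _ g hjmem).symm
  have h3 : ∏ l ∈ (Finset.univ.erase i).erase j, g l = 1 := by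
    apply Finset.prod_eq_one
    intro l hl
    rw [Finset.mem_erase, Finset.mem_erase] at hl
    simp only [hg, if_neg hl.2.1, if_neg hl.1, measure_univ]
  rw [h1, h2, h3, mul_one]
  simp [hg, if_neg hij, if_neg (Ne.symm hij)]

lemma pi_diag_null {k : ℕ} {i j : Fin k} (hij : i ≠ j) (μ0 : Measure ℝ)
    [IsProbabilityMeasure μ0] [NullSingletonClass μ0] :
    (Measure.pi fun _ : Fin k => μ0) {x : Fin k → ℝ | x i = x j} = 0 := by
  have hm : MeasurableSet {p : ℝ × ℝ | p.1 = p.2} :=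
    measurableSet_eq_fun measurable_fst measurable_snd
  have hpre : {x : Fin k → ℝ | x i = x j}
      = (fun x : Fin k → ℝ => (x i, x j)) ⁻¹' {p : ℝ × ℝ | p.1 = p.2} := rfl
  rw [hpre, ← Measure.map_apply (by fun_prop) hm, map_pair_eval hij]
  rw [Measure.prod_apply hm]
  have hz : ∀ x : ℝ, μ0 (Prod.mk x ⁻¹' {p : ℝ × ℝ | p.1 = p.2}) = 0 := fun x => by
    have : Prod.mk x ⁻¹' {p : ℝ × ℝ | p.1 = p.2} = {x} := by
      ext y; simp [eq_comm]
    rw [this]; exact measure_singleton x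
  simp [hz]

def Gfun (k : ℕ) (A : ℕ → ℕ → ℕ) (ρ : ℝ) (u : Fin k → ℝ) : ℝ :=
  ∏ i : Fin k, ∏ j ∈ Finset.univ.filter (fun j : Fin k => i ≤ j),
    (if i = j then (if 2 ∣ A i j then poiP (A i j / 2) (u i ^ 2 / (2 * ρ)) else 0)
     else poiP (A i j) (u i * u j / ρ))

lemma measurable_Gfun (k : ℕ) (A : ℕ → ℕ → ℕ) (ρ : ℝ) : Measurable (Gfun k A ρ) := by
  apply Finset.measurable_prod
  intro i _
  apply Finset.measurable_prod
  intro j _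
  by_cases hij : i = j
  · simp only [if_pos hij]
    by_cases hk : 2 ∣ A i j
    · simp only [if_pos hk]
      exact ((continuous_poiP _).measurable).comp (by fun_prop)
    · simp only [if_neg hk]; exact measurable_const
  · simp only [if_neg hij]
    exact ((continuous_poiP _).measurable).comp (by fun_prop)

lemma tEqW_transfer (k : ℕ) (A : ℕ → ℕ → ℕ) (ρ : ℝ) (f : ℝ → ℝ) (hf : Measurable f) :
    tEqW k A (fun x y k' => if x = y then
        (if 2 ∣ k' then poiP (k' / 2) (f x ^ 2 / (2 * ρ)) else 0)
      else poiP k' (f x * f y / ρ))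
    = ∫ u, Gfun k A ρ u
        ∂(Measure.pi fun _ : Fin k => ((volume : Measure ℝ).restrict (Icc 0 1)).map f) := by
  set μ0 := (volume : Measure ℝ).restrict (Icc (0:ℝ) 1) with hμ0
  have hT : MeasurePreserving (fun (x : Fin k → ℝ) i => f (x i))
      (Measure.pi fun _ : Fin k => μ0) (Measure.pi fun _ : Fin k => μ0.map f) :=
    measurePreserving_pi _ _ (fun i => ⟨hf, rfl⟩)
  unfold tEqW
  rw [show (volume : Measure (Fin k → ℝ)).restrict
        (Set.univ.pi fun _ : Fin k => Icc (0:ℝ) 1)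
      = Measure.pi fun _ : Fin k => μ0 from restrict_box_eq_pi k]
  have hae : ∀ᵐ x : Fin k → ℝ ∂(Measure.pi fun _ : Fin k => μ0),
      ∀ i j : Fin k, i ≠ j → x i ≠ x j := by
    rw [ae_all_iff]
    intro i
    rw [ae_all_iff]
    intro j
    by_cases hij : i = j
    · exact Eventually.of_forall fun x h => absurd hij h
    · have := pi_diag_null (k := k) hij μ0
      rw [ae_iff]
      convert this using 2
      ext x
      simp [hij]
  have hcongr : ∀ᵐ x : Fin k → ℝ ∂(Measure.pi fun _ : Fin k => μ0),
      (∏ i : Fin k, ∏ j ∈ Finset.univ.filter (fun j : Fin k => i ≤ j),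
        (if x i = x j then
          (if 2 ∣ A i j then poiP (A i j / 2) (f (x i) ^ 2 / (2 * ρ)) else 0)
         else poiP (A i j) (f (x i) * f (x j) / ρ)))
      = Gfun k A ρ (fun i => f (x i)) := by
    filter_upwards [hae] with x hx
    unfold Gfun
    refine Finset.prod_congr rfl fun i _ => Finset.prod_congr rfl fun j _ => ?_
    by_cases hij : i = j
    · subst hij
      simp only [if_pos rfl]
    · rw [if_neg (hx i j hij), if_neg hij]
  calc ∫ x : Fin k → ℝ, (∏ i : Fin k, ∏ j ∈ Finset.univ.filter (fun j : Fin k => i ≤ j),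
          (if x i = x j then
            (if 2 ∣ A i j then poiP (A i j / 2) (f (x i) ^ 2 / (2 * ρ)) else 0)
           else poiP (A i j) (f (x i) * f (x j) / ρ)))
          ∂(Measure.pi fun _ : Fin k => μ0)
      = ∫ x : Fin k → ℝ, Gfun k A ρ (fun i => f (x i))
          ∂(Measure.pi fun _ : Fin k => μ0) := integral_congr_ae hcongr
    _ = ∫ u, Gfun k A ρ u ∂(Measure.pi fun _ : Fin k => μ0.map f) := by
        rw [← hT.map_eq, integral_map hT.measurable.aemeasurable
          ((measurable_Gfun k A ρ).stronglyMeasurable.aestronglyMeasurable)]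


end AuxProofs

/-- `lim_{t→∞} W_t ≅ W_∞ ≅ V`. -/
theorem Wt_limit_and_equivalence
    (W : ℝ → ℝ → ℕ → ℝ) (hW : IsMultigraphon W)
    (hρpos : 0 < rhoW W) (hρfin : IntegrableOn (degW W) (Icc (0:ℝ) 1))
    (k : ℕ) (A : ℕ → ℕ → ℕ) (hA : IsAdjOn k A) :
    Tendsto (fun t : ℝ => tEqW k A (WtER W t)) atTop (𝓝 (tEqW k A (WinfER W))) ∧
    tEqW k A (WinfER W) = tEqW k A (VER W) := by
  constructor
  · exact part1 hW hρpos k A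
  · have h1 := tEqW_transfer k A (rhoW W) (degW W) (measurable_degW hW)
    have h2 := tEqW_transfer k A (rhoW W) (F0inv W) (measurable_F0inv hW)
    rw [map_F0inv_eq hW] at h2
    have e1 : tEqW k A (WinfER W) = tEqW k A (fun x y k' => if x = y then
        (if 2 ∣ k' then poiP (k' / 2) (degW W x ^ 2 / (2 * rhoW W)) else 0)
      else poiP k' (degW W x * degW W y / rhoW W)) := rfl
    have e2 : tEqW k A (VER W) = tEqW k A (fun x y k' => if x = y then
        (if 2 ∣ k' then poiP (k' / 2) (F0inv W x ^ 2 / (2 * rhoW W)) else 0)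
      else poiP k' (F0inv W x * F0inv W y / rhoW W)) := rfl
    rw [e1, e2, h1, h2]

end
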